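/- Let σ be a sequence of length n and 0 < ε' < 1/4 a real number. Suppose R' is a set of indices such that (a) every index j with ∃ k < j satisfying |[k,j) ∩ inv(j)| > (1/2 + 2ε')(j - k) belongs to R', and (b) every j ∈ R' satisfies ∃ k < j with |[k,j) ∩ inv(j)| > (j-k)/2. Then (1/2 - 2ε') · ed(σ) ≤ |R'| ≤ 2 · ed(σ). -/

import Mathlib

/-- A sequence is non-decreasing on an index set `S`. -/
def MonoOn {n : ℕ} {α : Type*} [Preorder α] (σ : Fin n → α) (S : Finset (Fin n)) : Prop :=
  ∀ i ∈ S, ∀ j ∈ S, i ≤ j → σ i ≤ σ j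

/-- Length of the longest non-decreasing subsequence. -/
noncomputable def lisLen {n : ℕ} {α : Type*} [Preorder α] (σ : Fin n → α) : ℕ :=
  sSup {k | ∃ S : Finset (Fin n), S.card = k ∧ MonoOn σ S}

/-- Edit distance to monotonicity: minimum number of deletions leaving a
non-decreasing subsequence. -/
noncomputable def edDist {n : ℕ} {α : Type*} [Preorder α] (σ : Fin n → α) : ℕ :=
  sInf {k | ∃ S : Finset (Fin n), S.card = k ∧ MonoOn σ Sᶜ}

namespace RSandwichAux

variable {n : ℕ}

def cnt (X : Finset (Fin n)) (a b : ℕ) : ℕ :=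
  (X.filter (fun i => a ≤ i.val ∧ i.val < b)).card

lemma cnt_zero_of (X : Finset (Fin n)) {a b : ℕ}
    (h : ∀ i ∈ X, ¬(a ≤ (i : ℕ) ∧ (i : ℕ) < b)) : cnt X a b = 0 := by
  unfold cnt
  rw [Finset.card_eq_zero, Finset.filter_eq_empty_iff]
  exact h

lemma cnt_nil (X : Finset (Fin n)) {a b : ℕ} (h : b ≤ a) : cnt X a b = 0 :=
  cnt_zero_of X (fun i _ => by omega)

lemma cnt_union_disj (X Y : Finset (Fin n)) (a b : ℕ) (h : Disjoint X Y) :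
    cnt (X ∪ Y) a b = cnt X a b + cnt Y a b := by
  unfold cnt
  rw [Finset.filter_union]
  exact Finset.card_union_of_disjoint (Finset.disjoint_filter_filter h)

lemma cnt_univ {a b : ℕ} (hab : a ≤ b) (hbn : b ≤ n) :
    cnt (Finset.univ : Finset (Fin n)) a b + a = b := by
  have himg : (Finset.filter (fun i => a ≤ i.val ∧ i.val < b)
      (Finset.univ : Finset (Fin n))).image Fin.val = Finset.Ico a b := by
    ext m
    simp only [Finset.mem_image, Finset.mem_filter, Finset.mem_univ, true_and,
      Finset.mem_Ico]
    constructor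
    · rintro ⟨i, ⟨h1, h2⟩, rfl⟩; exact ⟨h1, h2⟩
    · rintro ⟨h1, h2⟩
      exact ⟨⟨m, by omega⟩, ⟨h1, h2⟩, rfl⟩
  have hcard : cnt (Finset.univ : Finset (Fin n)) a b = (Finset.Ico a b).card := by
    rw [← himg]
    unfold cnt
    rw [Finset.card_image_of_injective _ Fin.val_injective]
  rw [hcard, Nat.card_Ico]
  omega

lemma cnt_split (X : Finset (Fin n)) {a b c : ℕ} (hab : a ≤ b) (hbc : b ≤ c) :
    cnt X a c = cnt X a b + cnt X b c := by
  unfold cnt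
  rw [← Finset.card_union_of_disjoint]
  · congr 1
    ext i
    simp only [Finset.mem_union, Finset.mem_filter]
    constructor
    · rintro ⟨hx, h1, h2⟩
      by_cases hib : (i : ℕ) < b
      · exact Or.inl ⟨hx, h1, hib⟩
      · exact Or.inr ⟨hx, by omega, h2⟩
    · rintro (⟨hx, h1, h2⟩ | ⟨hx, h1, h2⟩) <;> exact ⟨hx, by omega, by omega⟩
  · rw [Finset.disjoint_filter]
    rintro i _ ⟨h1, h2⟩ ⟨h3, h4⟩
    omega

lemma cnt_mono_right (X : Finset (Fin n)) {a b b' : ℕ} (h : b ≤ b') :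
    cnt X a b ≤ cnt X a b' := by
  apply Finset.card_le_card
  intro i hi
  rw [Finset.mem_filter] at hi ⊢
  exact ⟨hi.1, hi.2.1, by omega⟩

lemma cnt_clip (X : Finset (Fin n)) {a b c : ℕ} (hX : ∀ i ∈ X, (i : ℕ) < c)
    (hcb : c ≤ b) : cnt X a b = cnt X a c := by
  unfold cnt
  congr 1
  ext i
  simp only [Finset.mem_filter]
  constructor
  · rintro ⟨hx, h1, h2⟩; exact ⟨hx, h1, hX i hx⟩
  · rintro ⟨hx, h1, h2⟩; exact ⟨hx, h1, by omega⟩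

def keepF (σ : Fin n → ℕ) (R' : Finset (Fin n)) : ℕ → Finset (Fin n)
  | 0 => ∅
  | m+1 =>
    if h : m < n then
      (if (⟨m, h⟩ : Fin n) ∈ R' then keepF σ R' m
       else (keepF σ R' m).filter (fun y => σ y ≤ σ ⟨m, h⟩) ∪ {⟨m, h⟩})
    else keepF σ R' m

def CsetF (σ : Fin n → ℕ) (R' : Finset (Fin n)) (m : ℕ) : Finset (Fin n) :=
  Finset.univ.filter (fun i => i.val < m ∧ i ∉ keepF σ R' m ∧ i ∉ R')

variable (σ : Fin n → ℕ) (R' : Finset (Fin n))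

lemma mem_CsetF {m : ℕ} {i : Fin n} :
    i ∈ CsetF σ R' m ↔ i.val < m ∧ i ∉ keepF σ R' m ∧ i ∉ R' := by
  simp [CsetF]

lemma keep_succ_R {m : ℕ} (hm : m < n) (hjR : (⟨m, hm⟩ : Fin n) ∈ R') :
    keepF σ R' (m+1) = keepF σ R' m := by
  simp only [keepF, dif_pos hm, if_pos hjR]

lemma keep_succ_good {m : ℕ} (hm : m < n) (hjR : (⟨m, hm⟩ : Fin n) ∉ R') :
    keepF σ R' (m+1)
      = (keepF σ R' m).filter (fun y => σ y ≤ σ ⟨m, hm⟩) ∪ {⟨m, hm⟩} := by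
  simp only [keepF, dif_pos hm, if_neg hjR]

lemma mem_keep_succ_good {m : ℕ} (hm : m < n) (hjR : (⟨m, hm⟩ : Fin n) ∉ R')
    {i : Fin n} :
    i ∈ keepF σ R' (m+1)
      ↔ (i ∈ keepF σ R' m ∧ σ i ≤ σ ⟨m, hm⟩) ∨ i = ⟨m, hm⟩ := by
  rw [keep_succ_good σ R' hm hjR]
  simp [Finset.mem_union, Finset.mem_filter, or_comm]

structure Inv (ε' : ℝ) (m : ℕ) : Prop where
  subP : ∀ i ∈ keepF σ R' m, (i : ℕ) < m
  mono : MonoOn σ (keepF σ R' m)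
  notR : ∀ i ∈ keepF σ R' m, i ∉ R'
  wit  : ∀ x ∈ CsetF σ R' m, ∃ y ∈ keepF σ R' m, x ≤ y ∧ σ y < σ x
  gap  : ∀ a b : ℕ, b ≤ m →
      (∀ y ∈ keepF σ R' m, ¬(a ≤ (y : ℕ) ∧ (y : ℕ) < b)) →
      (b = m ∨ ∃ y ∈ keepF σ R' m, (y : ℕ) = b) →
      (1/2 - 2*ε') * (cnt (CsetF σ R' m) a b : ℝ)
        ≤ (1/2 + 2*ε') * (cnt R' a b : ℝ)
  pre  : ∀ b ≤ m, (b = m ∨ ∃ y ∈ keepF σ R' m, (y : ℕ) = b) →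
      (1/2 - 2*ε') * (cnt (CsetF σ R' m) 0 b : ℝ)
        ≤ (1/2 + 2*ε') * (cnt R' 0 b : ℝ)

lemma Cset_succ_R {m : ℕ} (hm : m < n) (hjR : (⟨m, hm⟩ : Fin n) ∈ R') :
    CsetF σ R' (m+1) = CsetF σ R' m := by
  ext i
  rw [mem_CsetF, mem_CsetF, keep_succ_R σ R' hm hjR]
  constructor
  · rintro ⟨h1, h2, h3⟩
    refine ⟨?_, h2, h3⟩
    rcases Nat.lt_succ_iff_lt_or_eq.mp h1 with h | h
    · exact h
    · exact absurd ((Fin.ext h : i = ⟨m, hm⟩) ▸ hjR) h3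
  · rintro ⟨h1, h2, h3⟩
    exact ⟨by omega, h2, h3⟩

/-- In the good case, the new deleted-good set is the old one together with
the removed "tops". -/
lemma Cset_succ_good {m : ℕ} (hm : m < n) (hjR : (⟨m, hm⟩ : Fin n) ∉ R')
    (HsubP : ∀ i ∈ keepF σ R' m, (i : ℕ) < m)
    (HnotR : ∀ i ∈ keepF σ R' m, i ∉ R') :
    CsetF σ R' (m+1)
      = CsetF σ R' m ∪ (keepF σ R' m).filter (fun y => ¬ σ y ≤ σ ⟨m, hm⟩) := by
  ext i
  rw [Finset.mem_union, mem_CsetF, mem_CsetF, Finset.mem_filter]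
  constructor
  · rintro ⟨h1, h2, h3⟩
    have hij : i ≠ (⟨m, hm⟩ : Fin n) := by
      intro hEq
      exact h2 ((mem_keep_succ_good σ R' hm hjR).mpr (Or.inr hEq))
    have hlt : i.val < m := by
      have : i.val ≠ m := fun h => hij (Fin.ext h)
      omega
    by_cases hk : i ∈ keepF σ R' m
    · right
      refine ⟨hk, fun hle => h2 ?_⟩
      exact (mem_keep_succ_good σ R' hm hjR).mpr (Or.inl ⟨hk, hle⟩)
    · left; exact ⟨hlt, hk, h3⟩
  · rintro (⟨h1, h2, h3⟩ | ⟨h1, h2⟩)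
    · refine ⟨by omega, ?_, h3⟩
      intro hk
      rcases (mem_keep_succ_good σ R' hm hjR).mp hk with ⟨hk', _⟩ | hEq
      · exact h2 hk'
      · rw [hEq] at h1
        simp at h1
    · refine ⟨by have := HsubP i h1; omega, ?_, HnotR i h1⟩
      intro hk
      rcases (mem_keep_succ_good σ R' hm hjR).mp hk with ⟨_, hle⟩ | hEq
      · exact h2 hle
      · have hlt := HsubP i h1
        rw [hEq] at hlt
        simp at hlt

lemma Cset_disj_tops {m : ℕ} (p : Fin n → Prop) [DecidablePred p] :
    Disjoint (CsetF σ R' m) ((keepF σ R' m).filter p) := by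
  rw [Finset.disjoint_left]
  intro i hi hi'
  exact ((mem_CsetF σ R').mp hi).2.1 (Finset.mem_filter.mp hi').1


/-- The key density inequality at a "cleanup event". -/
lemma event_ineq {ε' : ℝ} (hε0 : 0 < ε')
    (ha : ∀ j : Fin n, (∃ k : Fin n, k < j ∧
        (1/2 + 2*ε') * (((j : ℕ) : ℝ) - ((k : ℕ) : ℝ)) <
          (((Finset.Ico k j).filter (fun i => σ j < σ i)).card : ℝ)) → j ∈ R')
    {m : ℕ} (hm : m < n) (hjR : (⟨m, hm⟩ : Fin n) ∉ R') (H : Inv σ R' ε' m)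
    (a : ℕ)
    (hfree : ∀ y ∈ keepF σ R' (m+1), ¬(a ≤ (y : ℕ) ∧ (y : ℕ) < m)) :
    (1/2 - 2*ε') * (cnt (CsetF σ R' (m+1)) a m : ℝ)
      ≤ (1/2 + 2*ε') * (cnt R' a m : ℝ) := by
  by_cases ham : m ≤ a
  · rw [cnt_nil _ ham, cnt_nil _ ham]
    norm_num
  push_neg at ham
  set j : Fin n := ⟨m, hm⟩ with hjdef
  have han : a < n := lt_trans ham hm
  set k : Fin n := ⟨a, han⟩ with hkdef
  set T : Finset (Fin n) := (keepF σ R' m).filter (fun y => ¬ σ y ≤ σ j) with hT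
  -- new deleted-good count over the window splits
  have h1 : cnt (CsetF σ R' (m+1)) a m = cnt (CsetF σ R' m) a m + cnt T a m := by
    rw [Cset_succ_good σ R' hm hjR H.subP H.notR]
    exact cnt_union_disj _ _ _ _ (Cset_disj_tops σ R' _)
  -- all deleted-good elements and tops in the window are inversions of j
  have h2 : cnt (CsetF σ R' m) a m + cnt T a m
      ≤ ((Finset.Ico k j).filter (fun i => σ j < σ i)).card := by
    rw [show cnt (CsetF σ R' m) a m + cnt T a m
        = ((CsetF σ R' m).filter (fun i => a ≤ i.val ∧ i.val < m)
            ∪ T.filter (fun i => a ≤ i.val ∧ i.val < m)).card from ?_]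
    · apply Finset.card_le_card
      intro i hi
      rw [Finset.mem_union, Finset.mem_filter, Finset.mem_filter] at hi
      rw [Finset.mem_filter, Finset.mem_Ico]
      rcases hi with ⟨hiC, hstrip⟩ | ⟨hiT, hstrip⟩
      · obtain ⟨y, hy, hxy, hvy⟩ := H.wit i hiC
        have hyj : ¬ σ y ≤ σ j := by
          intro hyj
          refine hfree y ((mem_keep_succ_good σ R' hm hjR).mpr (Or.inl ⟨hy, hyj⟩)) ?_
          have h3 := H.subP y hy
          have h4 : i.val ≤ y.val := hxy
          exact ⟨le_trans hstrip.1 h4, h3⟩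
        refine ⟨⟨?_, ?_⟩, lt_trans (not_le.mp hyj) hvy⟩
        · show k ≤ i
          rw [Fin.le_def]
          exact hstrip.1
        · show i < j
          rw [Fin.lt_def]
          exact hstrip.2
      · rw [hT, Finset.mem_filter] at hiT
        refine ⟨⟨?_, ?_⟩, not_le.mp hiT.2⟩
        · show k ≤ i
          rw [Fin.le_def]; exact hstrip.1
        · show i < j
          rw [Fin.lt_def]; exact hstrip.2
    · rw [Finset.card_union_of_disjoint
        (Finset.disjoint_filter_filter (Cset_disj_tops σ R' (fun y => ¬ σ y ≤ σ j)))]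
      rfl
  -- partition of the window
  have h3 : cnt (CsetF σ R' m) a m + cnt T a m + cnt R' a m + a = m := by
    have hU : (CsetF σ R' m).filter (fun i => a ≤ i.val ∧ i.val < m)
        ∪ (T.filter (fun i => a ≤ i.val ∧ i.val < m)
           ∪ R'.filter (fun i => a ≤ i.val ∧ i.val < m))
        = (Finset.univ : Finset (Fin n)).filter (fun i => a ≤ i.val ∧ i.val < m) := by
      ext i
      simp only [Finset.mem_union, Finset.mem_filter, Finset.mem_univ, true_and]
      constructor
      · rintro (⟨_, h⟩ | ⟨_, h⟩ | ⟨_, h⟩) <;> exact h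
      · intro hstrip
        by_cases hk1 : i ∈ keepF σ R' m
        · refine Or.inr (Or.inl ?_)
          simp only [hT, Finset.mem_filter]
          exact ⟨⟨hk1, fun hle => hfree i
            ((mem_keep_succ_good σ R' hm hjR).mpr (Or.inl ⟨hk1, hle⟩)) hstrip⟩, hstrip⟩
        · by_cases hR : i ∈ R'
          · exact Or.inr (Or.inr ⟨hR, hstrip⟩)
          · exact Or.inl ⟨(mem_CsetF σ R').mpr ⟨hstrip.2, hk1, hR⟩, hstrip⟩
    have hd1 : Disjoint (T.filter (fun i => a ≤ i.val ∧ i.val < m))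
        (R'.filter (fun i => a ≤ i.val ∧ i.val < m)) := by
      apply Finset.disjoint_filter_filter
      rw [Finset.disjoint_left]
      intro i hi hiR
      rw [hT, Finset.mem_filter] at hi
      exact H.notR i hi.1 hiR
    have hd2 : Disjoint ((CsetF σ R' m).filter (fun i => a ≤ i.val ∧ i.val < m))
        ((T.filter (fun i => a ≤ i.val ∧ i.val < m))
          ∪ (R'.filter (fun i => a ≤ i.val ∧ i.val < m))) := by
      rw [Finset.disjoint_union_right]
      constructor
      · exact Finset.disjoint_filter_filter (Cset_disj_tops σ R' (fun y => ¬ σ y ≤ σ j))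
      · apply Finset.disjoint_filter_filter
        rw [Finset.disjoint_left]
        intro i hi hiR
        exact ((mem_CsetF σ R').mp hi).2.2 hiR
    have hu := cnt_univ (n := n) (le_of_lt ham) (le_of_lt hm)
    have hsum : cnt (Finset.univ : Finset (Fin n)) a m
        = cnt (CsetF σ R' m) a m + cnt T a m + cnt R' a m := by
      unfold cnt
      rw [← hU, Finset.card_union_of_disjoint hd2, Finset.card_union_of_disjoint hd1]
      omega
    omega
  -- goodness of j
  have hklt : k < j := by rw [Fin.lt_def]; exact ham
  have hcount : (((Finset.Ico k j).filter (fun i => σ j < σ i)).card : ℝ)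
      ≤ (1/2 + 2*ε') * ((m : ℝ) - (a : ℝ)) := by
    by_contra hcon
    push_neg at hcon
    refine hjR (ha j ⟨k, hklt, ?_⟩)
    have hjv : ((j : ℕ) : ℝ) = (m : ℝ) := by simp [hjdef]
    have hkv : ((k : ℕ) : ℝ) = (a : ℝ) := by simp [hkdef]
    rw [hjv, hkv]
    exact hcon
  -- combine
  rw [h1]
  have h2' : ((cnt (CsetF σ R' m) a m + cnt T a m : ℕ) : ℝ)
      ≤ (1/2 + 2*ε') * ((m : ℝ) - (a : ℝ)) :=
    le_trans (by exact_mod_cast h2) hcount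
  have h3' : (cnt (CsetF σ R' m) a m : ℝ) + (cnt T a m : ℝ) + (cnt R' a m : ℝ)
      + (a : ℝ) = (m : ℝ) := by exact_mod_cast h3
  push_cast at h2' ⊢
  nlinarith [h2', h3']

end RSandwichAux

namespace RSandwichAux

variable {n : ℕ} (σ : Fin n → ℕ) (R' : Finset (Fin n))

lemma surv_lt_top {ε' : ℝ} {m : ℕ} (H : Inv σ R' ε' m) (v : ℕ) {y z : Fin n}
    (hy : y ∈ keepF σ R' m) (hyle : σ y ≤ v)
    (hz : z ∈ keepF σ R' m) (hzn : ¬ σ z ≤ v) : y < z := by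
  by_contra h
  push_neg at h
  exact hzn (le_trans (H.mono z hz y hy h) hyle)

lemma inv_step {ε' : ℝ} (hε0 : 0 < ε')
    (ha : ∀ j : Fin n, (∃ k : Fin n, k < j ∧
        (1/2 + 2*ε') * (((j : ℕ) : ℝ) - ((k : ℕ) : ℝ)) <
          (((Finset.Ico k j).filter (fun i => σ j < σ i)).card : ℝ)) → j ∈ R')
    {m : ℕ} (hm : m < n) (H : Inv σ R' ε' m) : Inv σ R' ε' (m+1) := by
  have hRnonneg : ∀ a b : ℕ, (0:ℝ) ≤ (1/2 + 2*ε') * (cnt R' a b : ℝ) := by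
    intro a b; positivity
  by_cases hjR : (⟨m, hm⟩ : Fin n) ∈ R'
  · -- the element is deleted as a member of R'
    have hkeq := keep_succ_R σ R' hm hjR
    have hCeq := Cset_succ_R σ R' hm hjR
    constructor
    · intro i hi; rw [hkeq] at hi; have := H.subP i hi; omega
    · rw [hkeq]; exact H.mono
    · intro i hi; rw [hkeq] at hi; exact H.notR i hi
    · intro x hx
      rw [hCeq] at hx
      obtain ⟨y, hy, h1, h2⟩ := H.wit x hx
      exact ⟨y, by rw [hkeq]; exact hy, h1, h2⟩
    · intro a b hb hfree hend
      rw [hCeq]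
      by_cases hab : b ≤ a
      · rw [cnt_nil _ hab, cnt_nil _ hab]
        simpa using hRnonneg a b
      push_neg at hab
      have hfree' : ∀ y ∈ keepF σ R' m, ¬(a ≤ (y : ℕ) ∧ (y : ℕ) < b) := by
        intro y hy; exact hfree y (by rw [hkeq]; exact hy)
      rcases hend with rfl | ⟨y, hy, hyv⟩
      · -- b = m+1
        have hclip : cnt (CsetF σ R' m) a (m+1) = cnt (CsetF σ R' m) a m :=
          cnt_clip _ (fun i hi => ((mem_CsetF σ R').mp hi).1) (by omega)
        rw [hclip]
        refine le_trans (H.gap a m le_rfl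
          (fun y hy hmem => hfree' y hy ⟨hmem.1, by omega⟩) (Or.inl rfl)) ?_
        have := cnt_mono_right R' (a := a) (Nat.le_succ m)
        have hc : ((cnt R' a m : ℕ) : ℝ) ≤ (cnt R' a (m+1) : ℝ) := by exact_mod_cast this
        nlinarith [hc]
      · rw [hkeq] at hy
        have hbm : b ≤ m := by have := H.subP y hy; omega
        exact H.gap a b hbm hfree' (Or.inr ⟨y, hy, hyv⟩)
    · intro b hb hend
      rw [hCeq]
      rcases hend with rfl | ⟨y, hy, hyv⟩
      · have hclip : cnt (CsetF σ R' m) 0 (m+1) = cnt (CsetF σ R' m) 0 m :=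
          cnt_clip _ (fun i hi => ((mem_CsetF σ R').mp hi).1) (by omega)
        rw [hclip]
        refine le_trans (H.pre m le_rfl (Or.inl rfl)) ?_
        have := cnt_mono_right R' (a := 0) (Nat.le_succ m)
        have hc : ((cnt R' 0 m : ℕ) : ℝ) ≤ (cnt R' 0 (m+1) : ℝ) := by exact_mod_cast this
        nlinarith [hc]
      · rw [hkeq] at hy
        have hbm : b ≤ m := by have := H.subP y hy; omega
        exact H.pre b hbm (Or.inr ⟨y, hy, hyv⟩)
  · -- the element is good and is kept, deleting the "tops"
    have hCeq := Cset_succ_good σ R' hm hjR H.subP H.notR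
    -- the core bound : prefix bound up to m for the new state
    have hcore : (1/2 - 2*ε') * (cnt (CsetF σ R' (m+1)) 0 m : ℝ)
        ≤ (1/2 + 2*ε') * (cnt R' 0 m : ℝ) := by
      by_cases hS : ((keepF σ R' m).filter (fun y => σ y ≤ σ ⟨m, hm⟩)).Nonempty
      · -- there are survivors; split at the last survivor
        set Surv := (keepF σ R' m).filter (fun y => σ y ≤ σ ⟨m, hm⟩) with hSurv
        set y' : Fin n := Surv.max' hS with hy'
        have hy'S : y' ∈ Surv := Surv.max'_mem hS
        have hy'k : y' ∈ keepF σ R' m := (Finset.mem_filter.mp hy'S).1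
        have hy'le : σ y' ≤ σ ⟨m, hm⟩ := (Finset.mem_filter.mp hy'S).2
        have hy'm : (y' : ℕ) < m := H.subP y' hy'k
        set a := (y' : ℕ) + 1 with hadef
        have ham : a ≤ m := hy'm
        have hfree_a : ∀ y ∈ keepF σ R' (m+1), ¬(a ≤ (y : ℕ) ∧ (y : ℕ) < m) := by
          intro y hy hmemy
          rcases (mem_keep_succ_good σ R' hm hjR).mp hy with ⟨hyk, hyle⟩ | rfl
          · have : y ≤ y' := Finset.le_max' Surv y (Finset.mem_filter.mpr ⟨hyk, hyle⟩)
            have : (y : ℕ) ≤ (y' : ℕ) := this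
            omega
          · simp at hmemy
        have hev := event_ineq σ R' hε0 ha hm hjR H a hfree_a
        have hpre := H.pre (y' : ℕ) (le_of_lt (lt_trans hy'm hm) |> fun _ => le_of_lt hy'm)
          (Or.inr ⟨y', hy'k, rfl⟩)
        -- split the deleted-good count
        have hsplit1 : cnt (CsetF σ R' (m+1)) 0 m
            = cnt (CsetF σ R' (m+1)) 0 a + cnt (CsetF σ R' (m+1)) a m :=
          cnt_split _ (by omega) ham
        have hTzero : cnt ((keepF σ R' m).filter (fun y => ¬ σ y ≤ σ ⟨m, hm⟩)) 0 a = 0 := by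
          apply cnt_zero_of
          intro i hi
          rw [Finset.mem_filter] at hi
          have := surv_lt_top σ R' H (σ ⟨m, hm⟩) hy'k hy'le hi.1 hi.2
          have : (y' : ℕ) < (i : ℕ) := this
          omega
        have hCzero : cnt (CsetF σ R' m) (y' : ℕ) a = 0 := by
          apply cnt_zero_of
          intro i hi hbad
          have hiv : (i : ℕ) = (y' : ℕ) := by omega
          have : i = y' := Fin.val_injective hiv
          rw [this] at hi
          exact ((mem_CsetF σ R').mp hi).2.1 hy'k
        have hlow : cnt (CsetF σ R' (m+1)) 0 a = cnt (CsetF σ R' m) 0 (y' : ℕ) := by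
          rw [hCeq, cnt_union_disj _ _ _ _ (Cset_disj_tops σ R' _), hTzero,
            cnt_split (CsetF σ R' m) (Nat.zero_le _) (le_of_lt (by omega : (y':ℕ) < a)),
            hCzero]
          omega
        -- split the R' count
        have hr1 : cnt R' 0 m = cnt R' 0 (y' : ℕ) + cnt R' (y' : ℕ) m :=
          cnt_split _ (Nat.zero_le _) (le_of_lt hy'm)
        have hr2 : cnt R' (y' : ℕ) m = cnt R' (y' : ℕ) a + cnt R' a m :=
          cnt_split _ (by omega) ham
        have hmid : (0:ℝ) ≤ (1/2 + 2*ε') * (cnt R' (y' : ℕ) a : ℝ) := hRnonneg _ _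
        have e1 : ((cnt (CsetF σ R' (m+1)) 0 m : ℕ) : ℝ)
            = (cnt (CsetF σ R' m) 0 (y' : ℕ) : ℝ) + (cnt (CsetF σ R' (m+1)) a m : ℝ) := by
          rw [hsplit1, hlow]; push_cast; ring
        have e2 : ((cnt R' 0 m : ℕ) : ℝ)
            = (cnt R' 0 (y' : ℕ) : ℝ) + (cnt R' (y' : ℕ) a : ℝ) + (cnt R' a m : ℝ) := by
          rw [hr1, hr2]; push_cast; ring
        rw [e1, e2]
        nlinarith [hev, hpre, hmid]
      · -- no survivors: the whole prefix is one window
        have hfree_0 : ∀ y ∈ keepF σ R' (m+1), ¬(0 ≤ (y : ℕ) ∧ (y : ℕ) < m) := by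
          intro y hy hmemy
          rcases (mem_keep_succ_good σ R' hm hjR).mp hy with ⟨hyk, hyle⟩ | rfl
          · exact hS ⟨y, Finset.mem_filter.mpr ⟨hyk, hyle⟩⟩
          · simp at hmemy
        exact event_ineq σ R' hε0 ha hm hjR H 0 hfree_0
    constructor
    · intro i hi
      rcases (mem_keep_succ_good σ R' hm hjR).mp hi with ⟨hik, _⟩ | rfl
      · have := H.subP i hik; omega
      · simp
    · intro i hi i' hi' hii'
      rcases (mem_keep_succ_good σ R' hm hjR).mp hi with ⟨hik, hile⟩ | rfl <;>
        rcases (mem_keep_succ_good σ R' hm hjR).mp hi' with ⟨hik', hile'⟩ | rfl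
      · exact H.mono i hik i' hik' hii'
      · exact hile
      · exfalso
        have hlt := H.subP i' hik'
        rw [Fin.le_def] at hii'
        simp at hii'
        omega
      · exact le_refl _
    · intro i hi
      rcases (mem_keep_succ_good σ R' hm hjR).mp hi with ⟨hik, _⟩ | rfl
      · exact H.notR i hik
      · exact hjR
    · intro x hx
      rw [hCeq, Finset.mem_union] at hx
      rcases hx with hx | hx
      · obtain ⟨y, hy, hxy, hvy⟩ := H.wit x hx
        by_cases hyle : σ y ≤ σ ⟨m, hm⟩
        · exact ⟨y, (mem_keep_succ_good σ R' hm hjR).mpr (Or.inl ⟨hy, hyle⟩), hxy, hvy⟩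
        · refine ⟨⟨m, hm⟩, (mem_keep_succ_good σ R' hm hjR).mpr (Or.inr rfl), ?_, ?_⟩
          · rw [Fin.le_def]
            have := ((mem_CsetF σ R').mp hx).1
            simp
            omega
          · exact lt_trans (not_le.mp hyle) hvy
      · rw [Finset.mem_filter] at hx
        refine ⟨⟨m, hm⟩, (mem_keep_succ_good σ R' hm hjR).mpr (Or.inr rfl), ?_, not_le.mp hx.2⟩
        rw [Fin.le_def]
        have := H.subP x hx.1
        simp
        omega
    · intro a b hb hfree hend
      by_cases hab : b ≤ a
      · rw [cnt_nil _ hab, cnt_nil _ hab]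
        simpa using hRnonneg a b
      push_neg at hab
      rcases hend with rfl | ⟨y0, hy0, hy0v⟩
      · exfalso
        refine hfree ⟨m, hm⟩ ((mem_keep_succ_good σ R' hm hjR).mpr (Or.inr rfl)) ?_
        simp
        omega
      · rcases (mem_keep_succ_good σ R' hm hjR).mp hy0 with ⟨hy0k, hy0le⟩ | rfl
        · -- b ends at a survivor
          have hbm : b ≤ m := by have := H.subP y0 hy0k; omega
          have hTzero : cnt ((keepF σ R' m).filter (fun y => ¬ σ y ≤ σ ⟨m, hm⟩)) a b = 0 := by
            apply cnt_zero_of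
            intro i hi
            rw [Finset.mem_filter] at hi
            have hlt := surv_lt_top σ R' H (σ ⟨m, hm⟩) hy0k hy0le hi.1 hi.2
            have : (y0 : ℕ) < (i : ℕ) := hlt
            omega
          have heq : cnt (CsetF σ R' (m+1)) a b = cnt (CsetF σ R' m) a b := by
            rw [hCeq, cnt_union_disj _ _ _ _ (Cset_disj_tops σ R' _), hTzero]
            omega
          rw [heq]
          refine H.gap a b hbm ?_ (Or.inr ⟨y0, hy0k, hy0v⟩)
          intro z hz hmemz
          by_cases hzle : σ z ≤ σ ⟨m, hm⟩
          · exact hfree z ((mem_keep_succ_good σ R' hm hjR).mpr (Or.inl ⟨hz, hzle⟩)) hmemz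
          · have hlt := surv_lt_top σ R' H (σ ⟨m, hm⟩) hy0k hy0le hz hzle
            have : (y0 : ℕ) < (z : ℕ) := hlt
            omega
        · -- b = m : the event window
          have hbm : b = m := by simpa using hy0v.symm
          subst hbm
          exact event_ineq σ R' hε0 ha hm hjR H a hfree
    · intro b hb hend
      rcases hend with rfl | ⟨y0, hy0, hy0v⟩
      · have hclip : cnt (CsetF σ R' (m+1)) 0 (m+1) = cnt (CsetF σ R' (m+1)) 0 m := by
          apply cnt_clip
          · intro i hi
            rw [hCeq, Finset.mem_union] at hi
            rcases hi with hi | hi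
            · exact ((mem_CsetF σ R').mp hi).1
            · exact H.subP i (Finset.mem_filter.mp hi).1
          · omega
        rw [hclip]
        refine le_trans hcore ?_
        have := cnt_mono_right R' (a := 0) (Nat.le_succ m)
        have hc : ((cnt R' 0 m : ℕ) : ℝ) ≤ (cnt R' 0 (m+1) : ℝ) := by exact_mod_cast this
        nlinarith [hc]
      · rcases (mem_keep_succ_good σ R' hm hjR).mp hy0 with ⟨hy0k, hy0le⟩ | rfl
        · have hbm : b ≤ m := by have := H.subP y0 hy0k; omega
          have hTzero : cnt ((keepF σ R' m).filter (fun y => ¬ σ y ≤ σ ⟨m, hm⟩)) 0 b = 0 := by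
            apply cnt_zero_of
            intro i hi
            rw [Finset.mem_filter] at hi
            have hlt := surv_lt_top σ R' H (σ ⟨m, hm⟩) hy0k hy0le hi.1 hi.2
            have : (y0 : ℕ) < (i : ℕ) := hlt
            omega
          have heq : cnt (CsetF σ R' (m+1)) 0 b = cnt (CsetF σ R' m) 0 b := by
            rw [hCeq, cnt_union_disj _ _ _ _ (Cset_disj_tops σ R' _), hTzero]
            omega
          rw [heq]
          exact H.pre b hbm (Or.inr ⟨y0, hy0k, hy0v⟩)
        · have hbm : b = m := by simpa using hy0v.symm
          subst hbm
          exact hcore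

end RSandwichAux

namespace RSandwichAux

variable {n : ℕ} (σ : Fin n → ℕ) (R' : Finset (Fin n))

lemma cnt_full (X : Finset (Fin n)) : cnt X 0 n = X.card := by
  unfold cnt
  rw [Finset.filter_true_of_mem]
  intro i _
  exact ⟨Nat.zero_le _, i.isLt⟩

lemma inv_zero {ε' : ℝ} (hε0 : 0 < ε') : Inv σ R' ε' 0 := by
  have hC : CsetF σ R' 0 = ∅ := by
    ext i; simp [CsetF]
  have hK : keepF σ R' 0 = ∅ := rfl
  constructor
  · intro i hi; rw [hK] at hi; simp at hi
  · intro i hi; rw [hK] at hi; simp at hi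
  · intro i hi; rw [hK] at hi; simp at hi
  · intro x hx; rw [hC] at hx; simp at hx
  · intro a b _ _ _
    rw [hC]
    have h0 : cnt (∅ : Finset (Fin n)) a b = 0 := by simp [cnt]
    rw [h0]
    have : (0:ℝ) ≤ (1/2 + 2*ε') * (cnt R' a b : ℝ) := by positivity
    simpa using this
  · intro b _ _
    rw [hC]
    have h0 : cnt (∅ : Finset (Fin n)) 0 b = 0 := by simp [cnt]
    rw [h0]
    have : (0:ℝ) ≤ (1/2 + 2*ε') * (cnt R' 0 b : ℝ) := by positivity
    simpa using this

lemma inv_n {ε' : ℝ} (hε0 : 0 < ε')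
    (ha : ∀ j : Fin n, (∃ k : Fin n, k < j ∧
        (1/2 + 2*ε') * (((j : ℕ) : ℝ) - ((k : ℕ) : ℝ)) <
          (((Finset.Ico k j).filter (fun i => σ j < σ i)).card : ℝ)) → j ∈ R') :
    Inv σ R' ε' n := by
  have key : ∀ m, m ≤ n → Inv σ R' ε' m := by
    intro m
    induction m with
    | zero => intro _; exact inv_zero σ R' hε0
    | succ m ih =>
        intro h
        exact inv_step σ R' hε0 ha (by omega) (ih (by omega))
  exact key n le_rfl

end RSandwichAux

namespace RSandwichAux

variable {n : ℕ}

lemma lower_bound (σ : Fin n → ℕ) (R' : Finset (Fin n)) {ε' : ℝ}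
    (hε0 : 0 < ε') (hε1 : ε' < 1/4)
    (ha : ∀ j : Fin n, (∃ k : Fin n, k < j ∧
        (1/2 + 2*ε') * (((j : ℕ) : ℝ) - ((k : ℕ) : ℝ)) <
          (((Finset.Ico k j).filter (fun i => σ j < σ i)).card : ℝ)) → j ∈ R') :
    (1/2 - 2*ε') * (edDist σ : ℝ) ≤ (R'.card : ℝ) := by
  have H := inv_n σ R' hε0 ha
  -- the deleted set
  have hdisj : Disjoint (CsetF σ R' n) R' := by
    rw [Finset.disjoint_left]
    intro i hi hiR
    exact ((mem_CsetF σ R').mp hi).2.2 hiR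
  have hcompl : (keepF σ R' n)ᶜ = CsetF σ R' n ∪ R' := by
    ext i
    rw [Finset.mem_compl, Finset.mem_union, mem_CsetF]
    constructor
    · intro hk
      by_cases hR : i ∈ R'
      · exact Or.inr hR
      · exact Or.inl ⟨i.isLt, hk, hR⟩
    · rintro (⟨_, hk, _⟩ | hR)
      · exact hk
      · exact fun hk => H.notR i hk hR
  have hcard : ((keepF σ R' n)ᶜ).card = (CsetF σ R' n).card + R'.card := by
    rw [hcompl]
    exact Finset.card_union_of_disjoint hdisj
  have hed : edDist σ ≤ ((keepF σ R' n)ᶜ).card := by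
    apply Nat.sInf_le
    refine ⟨(keepF σ R' n)ᶜ, rfl, ?_⟩
    rw [compl_compl]
    exact H.mono
  have hpre := H.pre n le_rfl (Or.inl rfl)
  rw [cnt_full, cnt_full] at hpre
  have hnn : (0:ℝ) ≤ 1/2 - 2*ε' := by linarith
  have h1 : ((edDist σ : ℕ) : ℝ) ≤ ((CsetF σ R' n).card : ℝ) + (R'.card : ℝ) := by
    have : ((edDist σ : ℕ) : ℝ) ≤ (((keepF σ R' n)ᶜ).card : ℝ) := by exact_mod_cast hed
    rw [hcard] at this
    push_cast at this
    linarith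
  nlinarith [hpre, h1, (Nat.cast_nonneg R'.card : (0:ℝ) ≤ (R'.card : ℝ)),
    (Nat.cast_nonneg (CsetF σ R' n).card : (0:ℝ) ≤ ((CsetF σ R' n).card : ℝ))]

end RSandwichAux

namespace RSandwichAux

def phiW (c : ℕ → ℕ) : ℕ → ℕ
  | 0 => 0
  | m+1 => if c m = 0 then phiW c m - 1 else phiW c m + 1

lemma phiW_succ (c : ℕ → ℕ) (m : ℕ) :
    phiW c (m+1) = if c m = 0 then phiW c m - 1 else phiW c m + 1 := rfl

def fW (c : ℕ → ℕ) (m : ℕ) : ℤ :=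
  2 * (∑ i ∈ Finset.range m, (c i : ℤ)) - m

lemma fW_succ (c : ℕ → ℕ) (m : ℕ) : fW c (m+1) = fW c m + 2 * c m - 1 := by
  simp [fW, Finset.sum_range_succ]; ring

lemma fW_phiW_antitone (c : ℕ → ℕ) (hc : ∀ i, c i ≤ 1) {k m : ℕ} (hkm : k ≤ m) :
    fW c m - phiW c m ≤ fW c k - phiW c k := by
  induction m, hkm using Nat.le_induction with
  | base => exact le_refl _
  | succ m hkm ih =>
      refine le_trans ?_ ih
      rw [fW_succ, phiW_succ]
      rcases Nat.eq_zero_or_pos (c m) with h0 | h1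
      · rw [if_pos h0, h0]
        rcases Nat.eq_zero_or_pos (phiW c m) with hp | hp
        · simp [hp]
        · have h1' : (1:ℕ) ≤ phiW c m := hp
          rw [Nat.cast_sub h1']
          push_cast; linarith
      · have hc1 : c m = 1 := le_antisymm (hc m) h1
        rw [if_neg (by omega), hc1]
        push_cast; linarith

lemma phiW_pos_of_lt (c : ℕ → ℕ) (hc : ∀ i, c i ≤ 1) {k m : ℕ} (hkm : k ≤ m)
    (h : fW c k < fW c m) : 0 < phiW c m := by
  by_contra h0
  push_neg at h0
  have hz : phiW c m = 0 := Nat.le_zero.mp h0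
  have h1 := fW_phiW_antitone c hc hkm
  rw [hz] at h1
  have h2 : (0:ℤ) ≤ phiW c k := Int.natCast_nonneg _
  simp at h1
  linarith

lemma phiW_count (c : ℕ → ℕ) (hc : ∀ i, c i ≤ 1) (N : ℕ) :
    (∑ m ∈ Finset.range N, (if 0 < phiW c m then 1 else 0))
      + (∑ m ∈ Finset.range N, (if 0 < c m ∧ phiW c m = 0 then 1 else 0))
      + phiW c N ≤ 2 * ∑ m ∈ Finset.range N, c m := by
  induction N with
  | zero => simp [phiW]
  | succ N ih =>
      rw [Finset.sum_range_succ, Finset.sum_range_succ, Finset.sum_range_succ,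
        phiW_succ]
      have hcN := hc N
      by_cases h0 : c N = 0
      · rw [if_pos h0, h0]
        by_cases hp : phiW c N = 0
        · rw [if_neg (by omega), if_neg (by omega)]
          omega
        · rw [if_pos (by omega), if_neg (by omega)]
          omega
      · have hc1 : c N = 1 := le_antisymm hcN (Nat.pos_of_ne_zero h0)
        rw [if_neg h0, hc1]
        by_cases hp : phiW c N = 0
        · rw [if_neg (by omega), if_pos (by omega)]
          omega
        · rw [if_pos (by omega), if_neg (by omega)]
          omega

variable {n : ℕ}

lemma upper_bound (σ : Fin n → ℕ) (R' S : Finset (Fin n)) (hmono : MonoOn σ Sᶜ)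
    (hb : ∀ j ∈ R', ∃ k : Fin n, k < j ∧
        (j : ℕ) - (k : ℕ) <
          2 * ((Finset.Ico k j).filter (fun i => σ j < σ i)).card) :
    R'.card ≤ 2 * S.card := by
  classical
  set c : ℕ → ℕ := fun m => (S.filter (fun i : Fin n => i.val = m)).card with hcdef
  have hc1 : ∀ m, c m ≤ 1 := by
    intro m
    apply Finset.card_le_one.mpr
    intro a ha b hb
    rw [Finset.mem_filter] at ha hb
    exact Fin.val_injective (ha.2.trans hb.2.symm)
  have hsumc : ∑ m ∈ Finset.range n, c m = S.card :=
    (Finset.card_eq_sum_card_fiberwise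
      (f := fun i : Fin n => i.val) (t := Finset.range n)
      (fun x _ => Finset.mem_range.mpr x.isLt)).symm
  have hcpos : ∀ j : Fin n, j ∈ S → 0 < c (j : ℕ) := by
    intro j hj
    apply Finset.card_pos.mpr
    exact ⟨j, Finset.mem_filter.mpr ⟨hj, rfl⟩⟩
  -- key : every R' element not in S has positive potential
  have hkey : ∀ j ∈ R', j ∉ S → 0 < phiW c (j : ℕ) := by
    intro j hjR hjS
    obtain ⟨k, hkj, hcount⟩ := hb j hjR
    have hkj' : (k : ℕ) < (j : ℕ) := hkj
    -- the inversions of j in the window are all in S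
    have hsub : (Finset.Ico k j).filter (fun i => σ j < σ i)
        ⊆ S.filter (fun i : Fin n => (k : ℕ) ≤ i.val ∧ i.val < (j : ℕ)) := by
      intro i hi
      rw [Finset.mem_filter, Finset.mem_Ico] at hi
      obtain ⟨⟨hki, hij⟩, hσ⟩ := hi
      rw [Finset.mem_filter]
      refine ⟨?_, hki, hij⟩
      by_contra hiS
      have := hmono i (Finset.mem_compl.mpr hiS) j (Finset.mem_compl.mpr hjS)
        (le_of_lt hij)
      omega
    have hAcard : (S.filter (fun i : Fin n => (k : ℕ) ≤ i.val ∧ i.val < (j : ℕ))).card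
        = ∑ m ∈ Finset.Ico (k : ℕ) (j : ℕ), c m := by
      rw [Finset.card_eq_sum_card_fiberwise
        (f := fun i : Fin n => i.val) (t := Finset.Ico (k : ℕ) (j : ℕ))
        (fun x hx => by
          rw [Finset.mem_coe, Finset.mem_filter] at hx
          exact Finset.mem_Ico.mpr hx.2)]
      apply Finset.sum_congr rfl
      intro m hm
      rw [Finset.mem_Ico] at hm
      congr 1
      ext i
      simp only [Finset.mem_filter]
      constructor
      · rintro ⟨⟨h1, _⟩, h3⟩; exact ⟨h1, h3⟩
      · rintro ⟨h1, h3⟩; exact ⟨⟨h1, by omega⟩, h3⟩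
    have hN : (j : ℕ) - (k : ℕ) < 2 * ∑ m ∈ Finset.Ico (k : ℕ) (j : ℕ), c m := by
      calc (j : ℕ) - (k : ℕ)
          < 2 * ((Finset.Ico k j).filter (fun i => σ j < σ i)).card := hcount
        _ ≤ 2 * (S.filter (fun i : Fin n => (k : ℕ) ≤ i.val ∧ i.val < (j : ℕ))).card :=
            Nat.mul_le_mul_left 2 (Finset.card_le_card hsub)
        _ = 2 * ∑ m ∈ Finset.Ico (k : ℕ) (j : ℕ), c m := by rw [hAcard]
    have hfk : fW c (k : ℕ) < fW c (j : ℕ) := by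
      have hsum : (∑ i ∈ Finset.range (j : ℕ), (c i : ℤ))
          = (∑ i ∈ Finset.range (k : ℕ), (c i : ℤ))
            + ∑ i ∈ Finset.Ico (k : ℕ) (j : ℕ), (c i : ℤ) := by
        simp only [Finset.range_eq_Ico]
        exact (Finset.sum_Ico_consecutive _ (Nat.zero_le (k : ℕ)) (le_of_lt hkj')).symm
      have hZ : ((j : ℕ) : ℤ) - ((k : ℕ) : ℤ)
          < 2 * ∑ i ∈ Finset.Ico (k : ℕ) (j : ℕ), (c i : ℤ) := by
        have h1 : (((j : ℕ) - (k : ℕ) : ℕ) : ℤ)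
            < ((2 * ∑ m ∈ Finset.Ico (k : ℕ) (j : ℕ), c m : ℕ) : ℤ) := by
          exact_mod_cast hN
        push_cast [Nat.cast_sub (le_of_lt hkj')] at h1
        linarith [h1]
      unfold fW
      rw [hsum]
      linarith
    exact phiW_pos_of_lt c hc1 (le_of_lt hkj') hfk
  -- now count
  set Bf : Finset (Fin n) := Finset.univ.filter (fun j : Fin n => 0 < phiW c j.val) with hBf
  have hsubR : R' ⊆ (S.filter (fun j : Fin n => phiW c j.val = 0)) ∪ Bf := by
    intro j hj
    rw [Finset.mem_union, Finset.mem_filter, hBf, Finset.mem_filter]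
    by_cases hjS : j ∈ S
    · by_cases hphi : phiW c (j : ℕ) = 0
      · exact Or.inl ⟨hjS, hphi⟩
      · exact Or.inr ⟨Finset.mem_univ _, Nat.pos_of_ne_zero hphi⟩
    · exact Or.inr ⟨Finset.mem_univ _, hkey j hj hjS⟩
  have hcard1 : R'.card ≤ (S.filter (fun j : Fin n => phiW c j.val = 0)).card + Bf.card :=
    le_trans (Finset.card_le_card hsubR) (Finset.card_union_le _ _)
  have hB : Bf.card ≤ ∑ m ∈ Finset.range n, (if 0 < phiW c m then 1 else 0) := by
    rw [← Finset.card_filter]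
    apply Finset.card_le_card_of_injOn (fun i : Fin n => i.val)
    · intro i hi
      rw [Finset.mem_coe, hBf, Finset.mem_filter] at hi
      rw [Finset.mem_coe, Finset.mem_filter, Finset.mem_range]
      exact ⟨i.isLt, hi.2⟩
    · intro a _ b _ h
      exact Fin.val_injective h
  have hSf : (S.filter (fun j : Fin n => phiW c j.val = 0)).card
      ≤ ∑ m ∈ Finset.range n, (if 0 < c m ∧ phiW c m = 0 then 1 else 0) := by
    rw [← Finset.card_filter]
    apply Finset.card_le_card_of_injOn (fun i : Fin n => i.val)
    · intro i hi
      rw [Finset.mem_coe, Finset.mem_filter] at hi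
      rw [Finset.mem_coe, Finset.mem_filter, Finset.mem_range]
      exact ⟨i.isLt, hcpos i hi.1, hi.2⟩
    · intro a _ b _ h
      exact Fin.val_injective h
  have := phiW_count c hc1 n
  omega

end RSandwichAux


theorem R'_sandwich {n : ℕ} (σ : Fin n → ℕ) (ε' : ℝ) (hε0 : 0 < ε') (hε1 : ε' < 1/4)
    (R' : Finset (Fin n))
    (ha : ∀ j : Fin n, (∃ k : Fin n, k < j ∧
        (1/2 + 2*ε') * (((j : ℕ) : ℝ) - ((k : ℕ) : ℝ)) <
          (((Finset.Ico k j).filter (fun i => σ j < σ i)).card : ℝ)) → j ∈ R')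
    (hb : ∀ j ∈ R', ∃ k : Fin n, k < j ∧
        (j : ℕ) - (k : ℕ) <
          2 * ((Finset.Ico k j).filter (fun i => σ j < σ i)).card) :
    (1/2 - 2*ε') * (edDist σ : ℝ) ≤ (R'.card : ℝ) ∧ R'.card ≤ 2 * edDist σ := by
  constructor
  · exact RSandwichAux.lower_bound σ R' hε0 hε1 ha
  · have hne : {k | ∃ S : Finset (Fin n), S.card = k ∧ MonoOn σ Sᶜ}.Nonempty := by
      refine ⟨(Finset.univ : Finset (Fin n)).card, Finset.univ, rfl, ?_⟩
      intro i hi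
      simp at hi
    obtain ⟨S, hScard, hSmono⟩ := Nat.sInf_mem hne
    have hupper := RSandwichAux.upper_bound σ R' S hSmono hb
    have : R'.card ≤ 2 * sInf {k | ∃ S : Finset (Fin n), S.card = k ∧ MonoOn σ Sᶜ} := by
      rw [← hScard]
      exact hupper
    exact this
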